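/- If W is an extremal square-free word of length n over a k-letter alphabet, then W contains at least k(n+1)/2 distinct almost-square factor occurrences: each of the k(n+1) extensions of W contains a square, and each such square arises from an almost-square factor of W by a single insertion, with each almost-square accounting for at most two extensions. -/

import Mathlib

/-- `E` is an extension of `W`: `W` with one letter inserted at some position. -/
def Extends {A : Type*} (W E : List A) : Prop :=
  ∃ (W₁ W₂ : List A) (x : A), W = W₁ ++ W₂ ∧ E = W₁ ++ x :: W₂

/-- `WW'` is an almost-square: `W'` is an extension of `W`, or `W'` is obtained
from `W` by deleting one letter (equivalently, `W` is an extension of `W'`). -/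
def AlmostSq {A : Type*} (W W' : List A) : Prop :=
  Extends W W' ∨ Extends W' W

/-- `U` contains a square (a nonempty factor of the form `X ++ X`). -/
def HasSquare {A : Type*} (U : List A) : Prop :=
  ∃ X : List A, X ≠ [] ∧ X ++ X <:+: U

def SquareFree {A : Type*} (U : List A) : Prop := ¬ HasSquare U

/-- `F` realizes the pattern `X Y₁ X Y₂ X ⋯ X Y_t X` (with `2*t+1` nonempty blocks,
all odd-indexed blocks equal to `X`). -/
def RealizesPat {A : Type*} (t : ℕ) (F : List A) : Prop :=
  ∃ (X : List A) (Y : Fin t → List A), X ≠ [] ∧ (∀ i, Y i ≠ []) ∧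
    F = X ++ (List.ofFn (fun i => Y i ++ X)).flatten

/-- `W` contains the pattern `X Y₁ X ⋯ X Y_t X`. -/
def ContainsPat {A : Type*} (t : ℕ) (W : List A) : Prop :=
  ∃ F : List A, F <:+: W ∧ RealizesPat t F

/-- `W` is extremal `X Y₁ X ⋯ X Y_t X`-avoiding over the alphabet `A`. -/
def ExtremalPat {A : Type*} (t : ℕ) (W : List A) : Prop :=
  ¬ ContainsPat t W ∧ ∀ E : List A, Extends W E → ContainsPat t E

/-- `W` is extremal square-free over the alphabet `A`. -/
def ExtremalSF {A : Type*} (W : List A) : Prop :=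
  SquareFree W ∧ ∀ E : List A, Extends W E → HasSquare E

/-- If inserting `y` at position `a` and `z` at position `b > a` of `S` give the same
word, then this word contains the square `[y, y]`. -/
lemma sq_of_two_inserts {α : Type*} {S : List α} {a b : ℕ} {y z : α}
    (hab : a < b) (hbS : b ≤ S.length)
    (heq : S.take a ++ y :: S.drop a = S.take b ++ z :: S.drop b) :
    [y, y] <:+: S.take a ++ y :: S.drop a := by
  have ha : a ≤ S.length := le_of_lt (lt_of_lt_of_le hab hbS)
  have hlen : (S.take a).length = a := by simp [ha]
  have hd : (S.take a ++ y :: S.drop a).drop (S.take a).length = y :: S.drop a :=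
    List.drop_left
  rw [hlen] at hd
  have hd2 : (S.take b ++ z :: S.drop b).drop a
      = (S.take b).drop a ++ z :: S.drop b := by
    rw [List.drop_append]
    have h0 : a - (S.take b).length = 0 := by simp; omega
    rw [h0, List.drop_zero]
  have he : y :: S.drop a = (S.take b).drop a ++ z :: S.drop b := by
    rw [← hd, heq, hd2]
  have hdt : (S.take b).drop a = (S.drop a).take (b - a) := by
    rw [List.drop_take]
  rw [hdt] at he
  obtain ⟨r, R', hr⟩ : ∃ r R', S.drop a = r :: R' := by
    cases hR : S.drop a with
    | nil => exfalso; have := congrArg List.length hR; simp at this; omega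
    | cons r R' => exact ⟨r, R', rfl⟩
  obtain ⟨t, ht⟩ : ∃ t, b - a = t + 1 := ⟨b - a - 1, by omega⟩
  rw [hr, ht, List.take_succ_cons] at he
  have hy : y = r := (List.cons_eq_cons.mp he).1
  refine ⟨S.take a, R', ?_⟩
  rw [hr, ← hy]
  simp

/-- An insertion into `S` producing the fixed word `X` (which occurs in the
square-free word `W`) is unique. -/
lemma insert_unique {A : Type*} {W S X : List A} (hsf : SquareFree W) (hXW : X <:+: W)
    {d1 d2 : ℕ} {x1 x2 : A} (h31 : d1 ≤ S.length) (h32 : d2 ≤ S.length)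
    (h41 : X = S.take d1 ++ x1 :: S.drop d1) (h42 : X = S.take d2 ++ x2 :: S.drop d2) :
    d1 = d2 ∧ x1 = x2 := by
  rcases lt_trichotomy d1 d2 with h | h | h
  · exfalso
    have hsq := sq_of_two_inserts h h32 (h41.symm.trans h42)
    rw [← h41] at hsq
    exact hsf ⟨[x1], by simp, by simpa using hsq.trans hXW⟩
  · refine ⟨h, ?_⟩
    subst h
    have := List.append_cancel_left (h41.symm.trans h42)
    exact (List.cons_eq_cons.mp this).1
  · exfalso
    have hsq := sq_of_two_inserts h h31 (h42.symm.trans h41)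
    rw [← h42] at hsq
    exact hsf ⟨[x2], by simp, by simpa using hsq.trans hXW⟩

/-- Any square in the word obtained from `W` by inserting the letter `x` at
position `i` yields a decomposition of `W` exhibiting an almost-square factor. -/
lemma exists_wit {A : Type*} {W : List A} (hsf : SquareFree W)
    (i : ℕ) (hi : i ≤ W.length) (x : A)
    (hsq : HasSquare (W.take i ++ x :: W.drop i)) :
    ∃ (P S X Q : List A) (b : Bool) (d : ℕ),
      S.length + 1 = X.length ∧ d ≤ S.length ∧
      X = S.take d ++ x :: S.drop d ∧
      ((b = true ∧ W = P ++ S ++ X ++ Q ∧ i = P.length + d) ∨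
       (b = false ∧ W = P ++ X ++ S ++ Q ∧ i = P.length + X.length + d)) := by
  obtain ⟨Z, hZne, P, Q, hPQ⟩ := hsq
  -- hPQ : P ++ (Z ++ Z) ++ Q = W.take i ++ x :: W.drop i
  have hWtd : W.take i ++ W.drop i = W := List.take_append_drop i W
  have hlt : (W.take i).length = i := by simp [hi]
  have hPpre : P <+: W.take i ++ x :: W.drop i :=
    ⟨Z ++ Z ++ Q, by rw [← hPQ]; simp [List.append_assoc]⟩
  have hPZpre : P ++ Z <+: W.take i ++ x :: W.drop i :=
    ⟨Z ++ Q, by rw [← hPQ]; simp [List.append_assoc]⟩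
  have hPZZpre : P ++ (Z ++ Z) <+: W.take i ++ x :: W.drop i := ⟨Q, hPQ⟩
  have htpre : W.take i <+: W.take i ++ x :: W.drop i := ⟨x :: W.drop i, rfl⟩
  have htxpre : W.take i ++ [x] <+: W.take i ++ x :: W.drop i := ⟨W.drop i, by simp⟩
  -- the square must start at or before the inserted letter
  have hqi : P.length ≤ i := by
    by_contra h
    push_neg at h
    obtain ⟨P', hP'⟩ :=
      List.prefix_of_prefix_length_le htxpre hPpre (by simp [hlt]; omega)
    -- hP' : (W.take i ++ [x]) ++ P' = P
    have hdropeq : P' ++ ((Z ++ Z) ++ Q) = W.drop i := by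
      apply List.append_cancel_left (as := W.take i ++ [x])
      calc (W.take i ++ [x]) ++ (P' ++ ((Z ++ Z) ++ Q))
          = (((W.take i ++ [x]) ++ P') ++ (Z ++ Z)) ++ Q := by
            simp [List.append_assoc]
        _ = (P ++ (Z ++ Z)) ++ Q := by rw [hP']
        _ = W.take i ++ x :: W.drop i := hPQ
        _ = (W.take i ++ [x]) ++ W.drop i := by simp
    have hZZ : Z ++ Z <:+: W.drop i :=
      ⟨P', Q, by simpa [List.append_assoc] using hdropeq⟩
    exact hsf ⟨Z, hZne, hZZ.trans (List.drop_suffix i W).isInfix⟩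
  -- the square must end after the inserted letter
  have hi2 : i < P.length + (Z.length + Z.length) := by
    by_contra h
    push_neg at h
    obtain ⟨R, hR⟩ :=
      List.prefix_of_prefix_length_le hPZZpre htpre (by simp [hlt]; omega)
    have hZZ : Z ++ Z <:+: W.take i :=
      ⟨P, R, by simpa [List.append_assoc] using hR⟩
    exact hsf ⟨Z, hZne, hZZ.trans (List.take_prefix i W).isInfix⟩
  by_cases hcase : i < P.length + Z.length
  · -- insertion in the left copy of Z
    obtain ⟨T, hT⟩ :=
      List.prefix_of_prefix_length_le hPpre htpre (by simp [hlt]; omega)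
    -- hT : P ++ T = W.take i
    have hTlen : T.length = i - P.length := by
      have := congrArg List.length hT; simp [hlt] at this; omega
    have hcore : Z ++ (Z ++ Q) = T ++ x :: W.drop i := by
      apply List.append_cancel_left (as := P)
      calc P ++ (Z ++ (Z ++ Q)) = (P ++ (Z ++ Z)) ++ Q := by simp [List.append_assoc]
        _ = W.take i ++ x :: W.drop i := hPQ
        _ = (P ++ T) ++ x :: W.drop i := by rw [hT]
        _ = P ++ (T ++ x :: W.drop i) := by simp [List.append_assoc]
    have hTx : T ++ [x] <+: Z := by
      apply List.prefix_of_prefix_length_le (l₃ := Z ++ (Z ++ Q))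
      · rw [hcore]; exact ⟨W.drop i, by simp⟩
      · exact ⟨Z ++ Q, rfl⟩
      · simp; omega
    obtain ⟨X', hX'⟩ := hTx
    -- hX' : (T ++ [x]) ++ X' = Z
    have hdrop : X' ++ (Z ++ Q) = W.drop i := by
      apply List.append_cancel_left (as := T ++ [x])
      calc (T ++ [x]) ++ (X' ++ (Z ++ Q)) = ((T ++ [x]) ++ X') ++ (Z ++ Q) := by
            simp [List.append_assoc]
        _ = Z ++ (Z ++ Q) := by rw [hX']
        _ = T ++ x :: W.drop i := hcore
        _ = (T ++ [x]) ++ W.drop i := by simp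
    refine ⟨P, T ++ X', Z, Q, true, T.length, ?_, by simp, ?_, ?_⟩
    · have := congrArg List.length hX'; simp at this ⊢; omega
    · rw [List.take_left, List.drop_left, ← hX']; simp
    · left
      refine ⟨rfl, ?_, by omega⟩
      rw [← hWtd, ← hT, ← hdrop]; simp [List.append_assoc]
  · -- insertion in the right copy of Z
    push_neg at hcase
    obtain ⟨T, hT⟩ :=
      List.prefix_of_prefix_length_le hPZpre htpre (by simp [hlt]; omega)
    -- hT : (P ++ Z) ++ T = W.take i
    have hTlen : T.length = i - P.length - Z.length := by
      have := congrArg List.length hT; simp [hlt] at this; omega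
    have hcore : Z ++ Q = T ++ x :: W.drop i := by
      apply List.append_cancel_left (as := P ++ Z)
      calc (P ++ Z) ++ (Z ++ Q) = (P ++ (Z ++ Z)) ++ Q := by simp [List.append_assoc]
        _ = W.take i ++ x :: W.drop i := hPQ
        _ = ((P ++ Z) ++ T) ++ x :: W.drop i := by rw [hT]
        _ = (P ++ Z) ++ (T ++ x :: W.drop i) := by simp [List.append_assoc]
    have hTx : T ++ [x] <+: Z := by
      apply List.prefix_of_prefix_length_le (l₃ := Z ++ Q)
      · rw [hcore]; exact ⟨W.drop i, by simp⟩
      · exact ⟨Q, rfl⟩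
      · simp; omega
    obtain ⟨X', hX'⟩ := hTx
    have hdrop : X' ++ Q = W.drop i := by
      apply List.append_cancel_left (as := T ++ [x])
      calc (T ++ [x]) ++ (X' ++ Q) = ((T ++ [x]) ++ X') ++ Q := by
            simp [List.append_assoc]
        _ = Z ++ Q := by rw [hX']
        _ = T ++ x :: W.drop i := hcore
        _ = (T ++ [x]) ++ W.drop i := by simp
    refine ⟨P, T ++ X', Z, Q, false, T.length, ?_, by simp, ?_, ?_⟩
    · have := congrArg List.length hX'; simp at this ⊢; omega
    · rw [List.take_left, List.drop_left, ← hX']; simp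
    · right
      refine ⟨rfl, ?_, by omega⟩
      rw [← hWtd, ← hT, ← hdrop]; simp [List.append_assoc]

/-- The decomposition of `exists_wit` yields an almost-square factor occurrence. -/
lemma mem_of_wit {A : Type*} {W P S X Q : List A} {d : ℕ} {x : A}
    (h2 : S.length + 1 = X.length) (h4 : X = S.take d ++ x :: S.drop d)
    (hw : W = P ++ S ++ X ++ Q ∨ W = P ++ X ++ S ++ Q) :
    P.length < W.length ∧ ∃ U U' : List A, AlmostSq U U' ∧
      (U ++ U').length = S.length + X.length ∧ (U ++ U') <+: W.drop P.length := by
  have hext : Extends S X :=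
    ⟨S.take d, S.drop d, x, (List.take_append_drop d S).symm, h4⟩
  rcases hw with hw | hw
  · constructor
    · rw [hw]; simp; omega
    · refine ⟨S, X, Or.inl hext, by rw [List.length_append], ?_⟩
      have hdrop : W.drop P.length = S ++ X ++ Q := by
        rw [hw, show P ++ S ++ X ++ Q = P ++ (S ++ X ++ Q) by simp [List.append_assoc],
          List.drop_left]
      rw [hdrop]
      exact ⟨Q, rfl⟩
  · constructor
    · rw [hw]; simp; omega
    · refine ⟨X, S, Or.inr hext, by rw [List.length_append]; omega, ?_⟩
      have hdrop : W.drop P.length = X ++ S ++ Q := by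
        rw [hw, show P ++ X ++ S ++ Q = P ++ (X ++ S ++ Q) by simp [List.append_assoc],
          List.drop_left]
      rw [hdrop]
      exact ⟨Q, rfl⟩

/-- Two decompositions of the square-free word `W` with matching data describe the
same insertion. -/
lemma wit_inj {A : Type*} {W : List A} (hsf : SquareFree W)
    {P1 S1 X1 Q1 P2 S2 X2 Q2 : List A} {d1 d2 i1 i2 : ℕ} {x1 x2 : A} {b : Bool}
    (hq : P1.length = P2.length)
    (h21 : S1.length + 1 = X1.length) (h22 : S2.length + 1 = X2.length)
    (hl : S1.length + X1.length = S2.length + X2.length)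
    (h31 : d1 ≤ S1.length) (h32 : d2 ≤ S2.length)
    (h41 : X1 = S1.take d1 ++ x1 :: S1.drop d1) (h42 : X2 = S2.take d2 ++ x2 :: S2.drop d2)
    (h51 : (b = true ∧ W = P1 ++ S1 ++ X1 ++ Q1 ∧ i1 = P1.length + d1) ∨
           (b = false ∧ W = P1 ++ X1 ++ S1 ++ Q1 ∧ i1 = P1.length + X1.length + d1))
    (h52 : (b = true ∧ W = P2 ++ S2 ++ X2 ++ Q2 ∧ i2 = P2.length + d2) ∨
           (b = false ∧ W = P2 ++ X2 ++ S2 ++ Q2 ∧ i2 = P2.length + X2.length + d2)) :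
    i1 = i2 ∧ x1 = x2 := by
  have hS : S1.length = S2.length := by omega
  have hX : X1.length = X2.length := by omega
  rcases h51 with ⟨hb1, hw1, hi1⟩ | ⟨hb1, hw1, hi1⟩ <;>
    rcases h52 with ⟨hb2, hw2, hi2⟩ | ⟨hb2, hw2, hi2⟩
  · -- both in the "S before X" form
    have e1 : P1 ++ (S1 ++ (X1 ++ Q1)) = P2 ++ (S2 ++ (X2 ++ Q2)) := by
      simpa [List.append_assoc] using hw1.symm.trans hw2
    obtain ⟨hP, e2⟩ := List.append_inj e1 hq
    obtain ⟨hSe, e3⟩ := List.append_inj e2 hS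
    obtain ⟨hXe, _⟩ := List.append_inj e3 hX
    have hXW : X1 <:+: W := ⟨P1 ++ S1, Q1, by rw [hw1]⟩
    rw [← hSe, ← hXe] at h42
    rw [← hSe] at h32
    obtain ⟨hd, hx⟩ := insert_unique hsf hXW h31 h32 h41 h42
    exact ⟨by omega, hx⟩
  · exact absurd (hb1.symm.trans hb2) (by simp)
  · exact absurd (hb2.symm.trans hb1) (by simp)
  · -- both in the "X before S" form
    have e1 : P1 ++ (X1 ++ (S1 ++ Q1)) = P2 ++ (X2 ++ (S2 ++ Q2)) := by
      simpa [List.append_assoc] using hw1.symm.trans hw2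
    obtain ⟨hP, e2⟩ := List.append_inj e1 hq
    obtain ⟨hXe, e3⟩ := List.append_inj e2 hX
    obtain ⟨hSe, _⟩ := List.append_inj e3 hS
    have hXW : X1 <:+: W := ⟨P1, S1 ++ Q1, by rw [hw1]; simp [List.append_assoc]⟩
    rw [← hSe, ← hXe] at h42
    rw [← hSe] at h32
    obtain ⟨hd, hx⟩ := insert_unique hsf hXW h31 h32 h41 h42
    exact ⟨by omega, hx⟩

theorem stmt19 (k : ℕ) (n : ℕ) (W : List (Fin k)) (hW : ExtremalSF W)
    (hn : W.length = n) :
    {pl : ℕ × ℕ | pl.1 < n ∧ ∃ U U' : List (Fin k), AlmostSq U U' ∧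
        (U ++ U').length = pl.2 ∧ (U ++ U') <+: W.drop pl.1}.Finite ∧
    2 * {pl : ℕ × ℕ | pl.1 < n ∧ ∃ U U' : List (Fin k), AlmostSq U U' ∧
        (U ++ U').length = pl.2 ∧ (U ++ U') <+: W.drop pl.1}.ncard ≥ k * (n + 1) := by
  obtain ⟨hsf, hext⟩ := hW
  subst hn
  set SS : Set (ℕ × ℕ) := {pl : ℕ × ℕ | pl.1 < W.length ∧
    ∃ U U' : List (Fin k), AlmostSq U U' ∧
      (U ++ U').length = pl.2 ∧ (U ++ U') <+: W.drop pl.1} with hSS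
  have hfin : SS.Finite := by
    apply Set.Finite.subset ((Set.finite_Iio W.length).prod (Set.finite_Iic W.length))
    rintro ⟨p, l⟩ ⟨hp, U, U', -, hlen, hpre⟩
    refine ⟨hp, ?_⟩
    have h1 := hpre.length_le
    rw [hlen, List.length_drop] at h1
    simp only [Set.mem_Iic]
    omega
  refine ⟨hfin, ?_⟩
  have hstep : ∀ p : Fin (W.length + 1) × Fin k,
      ∃ (P S X Q : List (Fin k)) (b : Bool) (d : ℕ),
        S.length + 1 = X.length ∧ d ≤ S.length ∧
        X = S.take d ++ (p.2 : Fin k) :: S.drop d ∧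
        ((b = true ∧ W = P ++ S ++ X ++ Q ∧ (p.1 : ℕ) = P.length + d) ∨
         (b = false ∧ W = P ++ X ++ S ++ Q ∧ (p.1 : ℕ) = P.length + X.length + d)) :=
    fun p => exists_wit hsf p.1 (Nat.lt_succ_iff.mp p.1.isLt) p.2
      (hext _ ⟨W.take p.1, W.drop p.1, p.2, (List.take_append_drop _ _).symm, rfl⟩)
  choose P S X Q b d h2 h3 h4 h5 using hstep
  haveI := hfin.fintype
  let f : Fin (W.length + 1) × Fin k → ↥SS × Bool := fun p =>
    (⟨((P p).length, (S p).length + (X p).length),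
      mem_of_wit (h2 p) (h4 p)
        (by rcases h5 p with ⟨-, hw, -⟩ | ⟨-, hw, -⟩; exacts [Or.inl hw, Or.inr hw])⟩,
     b p)
  have hinj : Function.Injective f := by
    intro p1 p2 hfe
    have hb : b p1 = b p2 := congrArg Prod.snd hfe
    have hqv : ((P p1).length, (S p1).length + (X p1).length)
        = ((P p2).length, (S p2).length + (X p2).length) := by
      have := congrArg Prod.fst hfe
      exact Subtype.ext_iff.mp this
    have hq : (P p1).length = (P p2).length := congrArg Prod.fst hqv
    have hl : (S p1).length + (X p1).length = (S p2).length + (X p2).length :=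
      congrArg Prod.snd hqv
    have h5' := h5 p2
    rw [← hb] at h5'
    obtain ⟨hi, hx⟩ := wit_inj hsf hq (h2 p1) (h2 p2) hl (h3 p1) (h3 p2)
      (h4 p1) (h4 p2) (h5 p1) h5'
    exact Prod.ext (Fin.ext hi) hx
  have hcard := Fintype.card_le_of_injective f hinj
  rw [Fintype.card_prod, Fintype.card_fin, Fintype.card_fin, Fintype.card_prod,
    Fintype.card_bool] at hcard
  have hnc : SS.ncard = Fintype.card ↥SS := by
    rw [Set.ncard_eq_toFinset_card', Set.toFinset_card]
  calc k * (W.length + 1) = (W.length + 1) * k := Nat.mul_comm _ _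
    _ ≤ Fintype.card ↥SS * 2 := hcard
    _ = 2 * SS.ncard := by rw [hnc]; ring
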